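/- Assume q is uniformly Lipschitz continuous in (μ,a) with Lipschitz constant L_q. Then for any L ≥ 0 there exists a constant C_L, depending only on T, |𝕊|, L_q and L, such that for any t ∈ 𝕋, x⃗ ∈ 𝕊^N₀, μ ∈ 𝒫₀(𝕊), α, α̃ ∈ 𝒜^L_state, s ≥ t and i ∈ {1,…,N}: (i) E^{ℙ^{t,x⃗,(α,α̃)_i}}[ W₁(μ^N_s, μ^α_s) ] ≤ C_L θ_N, and (ii) W₁( ℙ^{t,x⃗,(α,α̃)_i}∘(X^i_s)^{−1}, ℙ^{μ^α;t,x_i,α̃}∘X_s^{−1} ) ≤ C_L θ_N, where θ_N := W₁(μ^N_{x⃗},μ) + 1/√N. -/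

import Mathlib

/-!
Statement 3 (Theorem 3.3, convergence of empirical measures for the `N`-player game
with homogeneous controls).

Finite-state mean field game; probability measures on the finite state space `S`
are encoded as functions `S → ℝ` (`IsProb`), with `W₁(μ,ν) = ∑_x |μ x − ν x|`.
Controls may depend on the current measure: `α : ℕ → S → (S → ℝ) → A`, and
`𝒜^L_state` is the class of such controls that are `L`-Lipschitz in the measure.
-/

open Finset

namespace MFGSetValue

variable {S A : Type*} [Fintype S] [DecidableEq S]

/-- A probability vector on the finite state space `S`. -/
def IsProb (μ : S → ℝ) : Prop := (∀ x, 0 ≤ μ x) ∧ ∑ x, μ x = 1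

/-- `W₁` distance (total-variation type) between two measures on `S`. -/
noncomputable def W1 (μ ν : S → ℝ) : ℝ := ∑ x, |μ x - ν x|

section Metric
variable [PseudoMetricSpace A]

/-- `α ∈ 𝒜^L_state`: measure-dependent controls, `L`-Lipschitz in the measure. -/
def LipCtrl (L : ℝ) (α : ℕ → S → (S → ℝ) → A) : Prop :=
  ∀ s x μ ν, dist (α s x μ) (α s x ν) ≤ L * W1 μ ν

end Metric

/-- The mean-field measure flow `μ^α` for a measure-dependent control `α`:
`μ^α_t = μ`, `μ^α_{s+1}(y) = ∑_x μ^α_s(x) q(s,x,μ^α_s,α(s,x,μ^α_s);y)`. -/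
noncomputable def flowM (q : ℕ → S → (S → ℝ) → A → S → ℝ)
    (α : ℕ → S → (S → ℝ) → A) (t : ℕ) (μ : S → ℝ) : ℕ → S → ℝ
  | 0 => μ
  | s + 1 =>
    if s + 1 ≤ t then μ
    else fun y => ∑ x, flowM q α t μ s x *
      q s x (flowM q α t μ s) (α s x (flowM q α t μ s)) y

/-- The law at each time of the Markov chain `ℙ^{μ^α; t, x₀, α̃}` started from `x₀`
at time `t`, with transitions `q(s,·,ν_s,α̃(s,·,ν_s);·)` against the flow `ν`. -/
noncomputable def chainM (q : ℕ → S → (S → ℝ) → A → S → ℝ) (ν : ℕ → S → ℝ)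
    (αt : ℕ → S → (S → ℝ) → A) (t : ℕ) (x₀ : S) : ℕ → S → ℝ
  | 0 => fun x => if x = x₀ then 1 else 0
  | s + 1 =>
    if s + 1 ≤ t then fun x => if x = x₀ then 1 else 0
    else fun y => ∑ x, chainM q ν αt t x₀ s x * q s x (ν s) (αt s x (ν s)) y

/-- The empirical measure `μ^N_{x⃗}` of a configuration `x⃗ ∈ 𝕊^N`. -/
noncomputable def emp {N : ℕ} (xv : Fin N → S) : S → ℝ :=
  fun x => (∑ i, if xv i = x then (1 : ℝ) else 0) / N

/-- The joint law `ℙ^{t,x⃗,α⃗}` of the `N`-player state process: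
`X⃗_t = x⃗` and independent transitions `q(s, x_i, μ^N_s, α^i(s,x_i,μ^N_s); ·)`. -/
noncomputable def jointFlow (q : ℕ → S → (S → ℝ) → A → S → ℝ) {N : ℕ}
    (αv : Fin N → ℕ → S → (S → ℝ) → A) (t : ℕ) (xv : Fin N → S) :
    ℕ → (Fin N → S) → ℝ
  | 0 => fun z => if z = xv then 1 else 0
  | s + 1 =>
    if s + 1 ≤ t then fun z => if z = xv then 1 else 0
    else fun z => ∑ w : Fin N → S, jointFlow q αv t xv s w *
      ∏ i, q s (w i) (emp w) (αv i s (w i) (emp w)) (z i)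

/-- The `N`-tuple `(α, α̃)_i`: player `i` uses `α̃`, all others use `α`. -/
def replaceI {N : ℕ} (α αt : ℕ → S → (S → ℝ) → A) (i : Fin N) :
    Fin N → ℕ → S → (S → ℝ) → A :=
  fun j => if j = i then αt else α

end MFGSetValue

open MFGSetValue


set_option linter.unusedSectionVars false

namespace MFGAux


variable {S : Type*} [Fintype S] [DecidableEq S]

lemma sum_prod_fin (N : ℕ) (h : Fin N → S → ℝ) :
    ∑ z : Fin N → S, ∏ j, h j (z j) = ∏ j, ∑ x, h j x := by
  rw [Finset.prod_univ_sum, Fintype.piFinset_univ]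

lemma marginal (N : ℕ) (g : Fin N → S → ℝ) (hg : ∀ j, ∑ x, g j x = 1) (i : Fin N) (y : S) :
    ∑ z : Fin N → S, (if z i = y then ∏ j, g j (z j) else 0) = g i y := by
  have : ∀ z : Fin N → S,
      (if z i = y then ∏ j, g j (z j) else 0)
        = ∏ j, (g j (z j) * (if j = i then (if z j = y then 1 else 0) else 1)) := by
    intro z
    rw [Finset.prod_mul_distrib, Finset.prod_ite_eq' univ i
      (fun j => if z j = y then (1:ℝ) else 0)]
    simp only [mem_univ, if_true]
    split_ifs <;> simp
  have e : (∑ z : Fin N → S, ∏ j, (g j (z j) * (if j = i then (if z j = y then 1 else 0) else 1)))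
      = ∏ j, ∑ x, (g j x * (if j = i then (if x = y then (1:ℝ) else 0) else 1)) :=
    sum_prod_fin N (fun j v => g j v * (if j = i then (if v = y then 1 else 0) else 1))
  rw [Finset.sum_congr rfl (fun z _ => this z), e]
  have : ∀ j, (∑ x, g j x * (if j = i then (if x = y then (1:ℝ) else 0) else 1))
      = if j = i then g j y else 1 := by
    intro j
    by_cases hj : j = i <;> simp [hj, hg j, mul_comm]
  rw [Finset.prod_congr rfl (fun j _ => this j), Finset.prod_ite_eq' univ i (fun j => g j y)]
  simp

lemma cs_bound {ι : Type*} [Fintype ι] (P X : ι → ℝ) (hP0 : ∀ z, 0 ≤ P z)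
    (hP1 : ∑ z, P z = 1) (B : ℝ) (hB : ∑ z, P z * X z ^ 2 ≤ B) :
    ∑ z, P z * |X z| ≤ Real.sqrt B := by
  have h0 : (0:ℝ) ≤ ∑ z, P z * |X z| :=
    Finset.sum_nonneg fun z _ => mul_nonneg (hP0 z) (abs_nonneg _)
  have hB0 : 0 ≤ B := le_trans (Finset.sum_nonneg fun z _ =>
    mul_nonneg (hP0 z) (sq_nonneg _)) hB
  refine (Real.le_sqrt h0 hB0).mpr ?_
  have key : (∑ z, Real.sqrt (P z) * (Real.sqrt (P z) * |X z|))^2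
      ≤ (∑ z, Real.sqrt (P z) ^ 2) * (∑ z, (Real.sqrt (P z) * |X z|) ^ 2) :=
    Finset.sum_mul_sq_le_sq_mul_sq univ _ _
  have e1 : ∀ z : ι, Real.sqrt (P z) * (Real.sqrt (P z) * |X z|) = P z * |X z| := by
    intro z
    rw [← mul_assoc, Real.mul_self_sqrt (hP0 z)]
  have e2 : ∀ z : ι, Real.sqrt (P z) ^ 2 = P z := fun z => Real.sq_sqrt (hP0 z)
  have e3 : ∀ z : ι, (Real.sqrt (P z) * |X z|) ^ 2 = P z * X z ^ 2 := by
    intro z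
    rw [mul_pow, e2, sq_abs]
  calc (∑ z, P z * |X z|)^2
      = (∑ z, Real.sqrt (P z) * (Real.sqrt (P z) * |X z|))^2 := by
        rw [Finset.sum_congr rfl (fun z _ => (e1 z).symm)]
    _ ≤ (∑ z, Real.sqrt (P z) ^ 2) * (∑ z, (Real.sqrt (P z) * |X z|) ^ 2) := key
    _ = (∑ z, P z) * (∑ z, P z * X z ^ 2) := by
        rw [Finset.sum_congr rfl (fun z _ => e2 z), Finset.sum_congr rfl (fun z _ => e3 z)]
    _ ≤ 1 * B := by
        rw [hP1, one_mul]
        exact le_trans hB (by linarith)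
    _ = B := one_mul B

lemma var_bound (N : ℕ) (p ξ : Fin N → S → ℝ) (hp0 : ∀ j x, 0 ≤ p j x)
    (hp1 : ∀ j, ∑ x, p j x = 1) (hmean : ∀ j, ∑ x, p j x * ξ j x = 0)
    (hbd : ∀ j x, ξ j x ^ 2 ≤ 1) :
    ∑ z : Fin N → S, (∏ j, p j (z j)) * (∑ j, ξ j (z j))^2 ≤ N := by
  have expand : ∀ z : Fin N → S, (∏ j, p j (z j)) * (∑ j, ξ j (z j))^2
      = ∑ j, ∑ k, (∏ m, (p m (z m) * ((if m = j then ξ j (z m) else 1) *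
          (if m = k then ξ k (z m) else 1)))) := by
    intro z
    have : (∑ j, ξ j (z j))^2 = ∑ j, ∑ k, ξ j (z j) * ξ k (z k) := by
      rw [sq, Finset.sum_mul_sum]
    rw [this, Finset.mul_sum]
    refine Finset.sum_congr rfl fun j _ => ?_
    rw [Finset.mul_sum]
    refine Finset.sum_congr rfl fun k _ => ?_
    rw [Finset.prod_mul_distrib, Finset.prod_mul_distrib,
      Finset.prod_ite_eq' univ j (fun m => ξ j (z m)),
      Finset.prod_ite_eq' univ k (fun m => ξ k (z m))]
    simp [mul_assoc, mul_comm, mul_left_comm]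
  rw [Finset.sum_congr rfl (fun z _ => expand z), Finset.sum_comm]
  have swap : ∀ j : Fin N,
      (∑ z : Fin N → S, ∑ k : Fin N, ∏ m, (p m (z m) * ((if m = j then ξ j (z m) else 1) *
          (if m = k then ξ k (z m) else 1))))
        = ∑ k : Fin N, ∑ z : Fin N → S, ∏ m, (p m (z m) * ((if m = j then ξ j (z m) else 1) *
          (if m = k then ξ k (z m) else 1))) := fun j => Finset.sum_comm
  rw [Finset.sum_congr rfl (fun j _ => swap j)]
  have term : ∀ j k : Fin N,
      (∑ z : Fin N → S, ∏ m, (p m (z m) * ((if m = j then ξ j (z m) else 1) *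
          (if m = k then ξ k (z m) else 1))))
        ≤ if j = k then 1 else 0 := by
    intro j k
    have e : (∑ z : Fin N → S, ∏ m, (p m (z m) * ((if m = j then ξ j (z m) else 1) *
          (if m = k then ξ k (z m) else 1))))
        = ∏ m, ∑ x, (p m x * ((if m = j then ξ j x else 1) *
          (if m = k then ξ k x else 1))) := sum_prod_fin N
      (fun m v => p m v * ((if m = j then ξ j v else 1) * (if m = k then ξ k v else 1)))
    rw [e]
    by_cases hjk : j = k
    · subst hjk
      simp only [if_pos rfl]
      have factor : ∀ m, (∑ x, p m x * ((if m = j then ξ j x else 1) *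
          (if m = j then ξ j x else 1))) = if m = j then (∑ x, p m x * ξ j x ^ 2) else 1 := by
        intro m
        by_cases hm : m = j
        · subst hm; simp [sq, mul_assoc]
        · simp [hm, hp1 m]
      rw [Finset.prod_congr rfl (fun m _ => factor m),
        Finset.prod_ite_eq' univ j (fun m => ∑ x, p m x * ξ j x ^ 2)]
      simp only [mem_univ, if_true]
      calc ∑ x, p j x * ξ j x ^ 2 ≤ ∑ x, p j x * 1 :=
            Finset.sum_le_sum fun x _ => mul_le_mul_of_nonneg_left (hbd j x) (hp0 j x)
        _ = 1 := by simp [hp1 j]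
    · simp only [if_neg hjk]
      refine le_of_eq (Finset.prod_eq_zero (Finset.mem_univ j) ?_)
      have : ∀ x, p j x * ((if j = j then ξ j x else 1) * (if j = k then ξ k x else 1))
          = p j x * ξ j x := by
        intro x; simp [hjk]
      rw [Finset.sum_congr rfl (fun x _ => this x), hmean j]
  calc ∑ j : Fin N, ∑ k : Fin N, (∑ z : Fin N → S, ∏ m, (p m (z m) *
          ((if m = j then ξ j (z m) else 1) * (if m = k then ξ k (z m) else 1))))
      ≤ ∑ j : Fin N, ∑ k : Fin N, if j = k then (1:ℝ) else 0 :=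
        Finset.sum_le_sum fun j _ => Finset.sum_le_sum fun k _ => term j k
    _ = N := by simp


end MFGAux

namespace MFGAux2
open MFGSetValue

variable {S A : Type*} [Fintype S] [DecidableEq S]

lemma W1_nonneg (μ ν : S → ℝ) : 0 ≤ W1 μ ν :=
  Finset.sum_nonneg fun x _ => abs_nonneg _

lemma W1_triangle (a b c : S → ℝ) : W1 a c ≤ W1 a b + W1 b c := by
  rw [W1, W1, W1, ← Finset.sum_add_distrib]
  exact Finset.sum_le_sum fun x _ => abs_sub_le _ _ _

variable (q : ℕ → S → (S → ℝ) → A → S → ℝ) (α αt : ℕ → S → (S → ℝ) → A)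
  (t : ℕ) (μ : S → ℝ)

lemma flowM_le_t {u : ℕ} (h : u ≤ t) : flowM q α t μ u = μ := by
  cases u with
  | zero => rfl
  | succ n => rw [flowM, if_pos h]

lemma flowM_succ {u : ℕ} (h : ¬ u + 1 ≤ t) :
    flowM q α t μ (u + 1) = fun y => ∑ x, flowM q α t μ u x *
      q u x (flowM q α t μ u) (α u x (flowM q α t μ u)) y := by
  rw [flowM, if_neg h]

lemma chainM_le_t (ν : ℕ → S → ℝ) (x₀ : S) {u : ℕ} (h : u ≤ t) :
    chainM q ν αt t x₀ u = fun x => if x = x₀ then 1 else 0 := by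
  cases u with
  | zero => rfl
  | succ n => rw [chainM, if_pos h]

lemma chainM_succ (ν : ℕ → S → ℝ) (x₀ : S) {u : ℕ} (h : ¬ u + 1 ≤ t) :
    chainM q ν αt t x₀ (u + 1) = fun y => ∑ x,
      chainM q ν αt t x₀ u x * q u x (ν u) (αt u x (ν u)) y := by
  rw [chainM, if_neg h]

variable {N : ℕ} (αv : Fin N → ℕ → S → (S → ℝ) → A) (xv : Fin N → S)

lemma jointFlow_le_t {u : ℕ} (h : u ≤ t) :
    jointFlow q αv t xv u = fun z => if z = xv then 1 else 0 := by
  cases u with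
  | zero => rfl
  | succ n => rw [jointFlow, if_pos h]

lemma jointFlow_succ {u : ℕ} (h : ¬ u + 1 ≤ t) :
    jointFlow q αv t xv (u + 1) = fun z => ∑ w : Fin N → S, jointFlow q αv t xv u w *
      ∏ j, q u (w j) (emp w) (αv j u (w j) (emp w)) (z j) := by
  rw [jointFlow, if_neg h]

lemma emp_isProb (hN : 0 < N) (w : Fin N → S) : IsProb (emp w) := by
  constructor
  · intro x
    apply div_nonneg _ (Nat.cast_nonneg N)
    exact Finset.sum_nonneg fun j _ => by positivity
  · simp only [emp, ← Finset.sum_div]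
    rw [Finset.sum_comm]
    have h1 : ∀ j : Fin N, (∑ x, if w j = x then (1:ℝ) else 0) = 1 := fun j => by simp
    rw [Finset.sum_congr rfl (fun j _ => h1 j), Finset.sum_const, card_univ,
      Fintype.card_fin, nsmul_eq_mul, mul_one]
    field_simp

lemma emp_avg (hN : 0 < N) (w : Fin N → S) (g : S → ℝ) :
    ∑ x, emp w x * g x = (∑ j, g (w j)) / N := by
  have e : ∀ x, emp w x * g x = (∑ j, if w j = x then g x else 0) / N := by
    intro x
    simp only [emp]
    rw [div_mul_eq_mul_div, Finset.sum_mul]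
    congr 1
    exact Finset.sum_congr rfl fun j _ => by split_ifs <;> simp
  rw [Finset.sum_congr rfl (fun x _ => e x), ← Finset.sum_div, Finset.sum_comm]
  congr 1
  exact Finset.sum_congr rfl fun j _ => by simp

lemma fiber (P : (Fin N → S) → ℝ) (i : Fin N) (f : S → ℝ) :
    ∑ x, (∑ w : Fin N → S, if w i = x then P w else 0) * f x
      = ∑ w : Fin N → S, P w * f (w i) := by
  have e1 : ∀ x, (∑ w : Fin N → S, if w i = x then P w else 0) * f x
      = ∑ w : Fin N → S, if w i = x then P w * f (w i) else 0 := by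
    intro x
    rw [Finset.sum_mul]
    exact Finset.sum_congr rfl fun w _ => by split_ifs with h <;> simp [h]
  rw [Finset.sum_congr rfl (fun x _ => e1 x), Finset.sum_comm]
  exact Finset.sum_congr rfl fun w _ => by simp

lemma inner_est {N : ℕ} (hN : 0 < N) (g : Fin N → S → ℝ)
    (hg01 : ∀ k x, 0 < g k x ∧ g k x < 1) (hg1 : ∀ k, ∑ x, g k x = 1) (target : S → ℝ) :
    (∑ z : Fin N → S, (∏ k, g k (z k)) * W1 (emp z) target)
      ≤ (Fintype.card S : ℝ) / Real.sqrt N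
        + W1 (fun y => (∑ k, g k y) / N) target := by
  have hNR : (0:ℝ) < N := by exact_mod_cast hN
  have hsN : 0 < Real.sqrt N := Real.sqrt_pos.mpr hNR
  have hg0 : ∀ k x, 0 ≤ g k x := fun k x => (hg01 k x).1.le
  have hprod0 : ∀ z : Fin N → S, 0 ≤ ∏ k, g k (z k) :=
    fun z => Finset.prod_nonneg fun k _ => hg0 k (z k)
  have hprodsum : (∑ z : Fin N → S, ∏ k, g k (z k)) = 1 := by
    rw [MFGAux.sum_prod_fin N g, Finset.prod_congr rfl (fun k _ => hg1 k),
      Finset.prod_const_one]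
  have tri : ∀ z : Fin N → S, W1 (emp z) target
      ≤ W1 (emp z) (fun y => (∑ k, g k y) / N) + W1 (fun y => (∑ k, g k y) / N) target :=
    fun z => W1_triangle _ _ _
  have step1 : (∑ z : Fin N → S, (∏ k, g k (z k)) * W1 (emp z) target)
      ≤ (∑ z : Fin N → S, (∏ k, g k (z k)) * W1 (emp z) (fun y => (∑ k, g k y) / N))
        + W1 (fun y => (∑ k, g k y) / N) target := by
    calc (∑ z : Fin N → S, (∏ k, g k (z k)) * W1 (emp z) target)
        ≤ ∑ z : Fin N → S, (∏ k, g k (z k)) * (W1 (emp z) (fun y => (∑ k, g k y) / N)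
            + W1 (fun y => (∑ k, g k y) / N) target) :=
          Finset.sum_le_sum fun z _ => mul_le_mul_of_nonneg_left (tri z) (hprod0 z)
      _ = (∑ z : Fin N → S, (∏ k, g k (z k)) * W1 (emp z) (fun y => (∑ k, g k y) / N))
          + (∑ z : Fin N → S, (∏ k, g k (z k))) * W1 (fun y => (∑ k, g k y) / N) target := by
          rw [Finset.sum_mul, ← Finset.sum_add_distrib]
          exact Finset.sum_congr rfl fun z _ => by ring
      _ = _ := by rw [hprodsum, one_mul]
  have fluct : (∑ z : Fin N → S, (∏ k, g k (z k)) * W1 (emp z) (fun y => (∑ k, g k y) / N))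
      ≤ (Fintype.card S : ℝ) / Real.sqrt N := by
    have swap : (∑ z : Fin N → S, (∏ k, g k (z k)) * W1 (emp z) (fun y => (∑ k, g k y) / N))
        = ∑ y, ∑ z : Fin N → S, (∏ k, g k (z k)) * |emp z y - (∑ k, g k y) / N| := by
      rw [Finset.sum_comm]
      exact Finset.sum_congr rfl fun z _ => by simp only [W1]; rw [Finset.mul_sum]
    rw [swap]
    have peryy : ∀ y : S, (∑ z : Fin N → S, (∏ k, g k (z k)) * |emp z y - (∑ k, g k y) / N|)
        ≤ 1 / Real.sqrt N := by
      intro y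
      have hXz : ∀ z : Fin N → S, emp z y - (∑ k, g k y) / N
          = (∑ k, ((if z k = y then (1:ℝ) else 0) - g k y)) / N := by
        intro z
        simp only [emp]
        rw [div_sub_div_same]
        congr 1
        rw [← Finset.sum_sub_distrib]
      have hmean : ∀ k, ∑ x, g k x * ((if x = y then (1:ℝ) else 0) - g k y) = 0 := by
        intro k
        have e : ∀ x, g k x * ((if x = y then (1:ℝ) else 0) - g k y)
            = (if x = y then g k x else 0) - g k x * g k y := by
          intro x; split_ifs <;> ring
        rw [Finset.sum_congr rfl (fun x _ => e x), Finset.sum_sub_distrib,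
          Finset.sum_ite_eq' univ y (g k), ← Finset.sum_mul, hg1 k, one_mul]
        simp
      have hbd : ∀ k x, ((if x = y then (1:ℝ) else 0) - g k y) ^ 2 ≤ 1 := by
        intro k x
        have h1 := (hg01 k y).1
        have h2 := (hg01 k y).2
        split_ifs <;> nlinarith
      have vb := MFGAux.var_bound N g (fun k x => (if x = y then (1:ℝ) else 0) - g k y)
        hg0 hg1 hmean hbd
      have h2nd : (∑ z : Fin N → S, (∏ k, g k (z k)) *
          ((∑ k, ((if z k = y then (1:ℝ) else 0) - g k y)) / N) ^ 2) ≤ 1 / N := by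
        have e : ∀ z : Fin N → S, (∏ k, g k (z k)) *
            ((∑ k, ((if z k = y then (1:ℝ) else 0) - g k y)) / N) ^ 2
            = ((∏ k, g k (z k)) *
              (∑ k, ((if z k = y then (1:ℝ) else 0) - g k y)) ^ 2) / (N:ℝ)^2 := by
          intro z; rw [div_pow, mul_div_assoc]
        rw [Finset.sum_congr rfl (fun z _ => e z), ← Finset.sum_div]
        have hNN : (N:ℝ) / (N:ℝ)^2 = 1 / N := by
          rw [pow_two, div_mul_eq_div_div, div_self (ne_of_gt hNR)]
        refine le_trans ((div_le_div_iff_of_pos_right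
          (by positivity : (0:ℝ) < (N:ℝ)^2)).mpr vb) (le_of_eq hNN)
      have cs := MFGAux.cs_bound (fun z : Fin N → S => ∏ k, g k (z k))
        (fun z => (∑ k, ((if z k = y then (1:ℝ) else 0) - g k y)) / N)
        hprod0 hprodsum (1/N) h2nd
      have conv : (∑ z : Fin N → S, (∏ k, g k (z k)) * |emp z y - (∑ k, g k y) / N|)
          = ∑ z : Fin N → S, (∏ k, g k (z k)) *
              |(∑ k, ((if z k = y then (1:ℝ) else 0) - g k y)) / N| :=
        Finset.sum_congr rfl fun z _ => by rw [hXz z]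
      rw [conv]
      refine cs.trans (le_of_eq ?_)
      rw [one_div, Real.sqrt_inv, one_div]
    refine (Finset.sum_le_sum fun y _ => peryy y).trans ?_
    rw [Finset.sum_const, card_univ, nsmul_eq_mul, mul_one_div]
  linarith [step1, fluct]


end MFGAux2

set_option maxHeartbeats 2000000 in
/-- Theorem 3.3.  Assume `q` is uniformly Lipschitz in `(μ,a)` with
constant `L_q`.  For any `L ≥ 0` there is a constant `C_L` (depending only on `T`,
`|𝕊|`, `L_q`, `L`) such that for all `t ∈ 𝕋`, `x⃗ ∈ 𝕊^N₀`, `μ ∈ 𝒫₀(𝕊)`,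
`α, α̃ ∈ 𝒜^L_state`, `t ≤ s ≤ T` and player `i`:
(i)  `E^{ℙ^{t,x⃗,(α,α̃)_i}}[W₁(μ^N_s, μ^α_s)] ≤ C_L θ_N`;
(ii) `W₁(ℙ^{t,x⃗,(α,α̃)_i}∘(X^i_s)^{-1}, ℙ^{μ^α;t,x_i,α̃}∘X_s^{-1}) ≤ C_L θ_N`;
where `θ_N = W₁(μ^N_{x⃗}, μ) + 1/√N`. -/
theorem empirical_measure_convergence
    {S A : Type*} [Fintype S] [DecidableEq S] [PseudoMetricSpace A]
    (T : ℕ) (Lq : ℝ)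
    (L : ℝ) (hL : 0 ≤ L) :
    ∃ C : ℝ, 0 < C ∧
      ∀ (q : ℕ → S → (S → ℝ) → A → S → ℝ),
        (∀ s x μ a y, IsProb μ → 0 < q s x μ a y ∧ q s x μ a y < 1) →
        (∀ s x μ a, IsProb μ → ∑ y, q s x μ a y = 1) →
        (∀ s x μ ν a b y, IsProb μ → IsProb ν →
          |q s x μ a y - q s x ν b y| ≤ Lq * (W1 μ ν + dist a b)) →
        ∀ (N : ℕ), 0 < N →
        ∀ (t : ℕ), t ≤ T →
        ∀ (xv : Fin N → S), (∀ x, 0 < emp xv x) →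
        ∀ (μ : S → ℝ), IsProb μ → (∀ x, 0 < μ x) →
        ∀ (α αt : ℕ → S → (S → ℝ) → A), LipCtrl L α → LipCtrl L αt →
        ∀ (s : ℕ), t ≤ s → s ≤ T →
        ∀ (i : Fin N),
          (∑ w : Fin N → S,
              jointFlow q (replaceI α αt i) t xv s w * W1 (emp w) (flowM q α t μ s))
            ≤ C * (W1 (emp xv) μ + 1 / Real.sqrt N) ∧
          W1 (fun y => ∑ w : Fin N → S,
                if w i = y then jointFlow q (replaceI α αt i) t xv s w else 0)
              (chainM q (flowM q α t μ) αt t (xv i) s)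
            ≤ C * (W1 (emp xv) μ + 1 / Real.sqrt N) := by
  classical
  have hcS0 : (0:ℝ) ≤ (Fintype.card S : ℝ) := Nat.cast_nonneg _
  set K' : ℝ := (Fintype.card S : ℝ) * |Lq| * (1 + L) with hK'
  have hK'0 : 0 ≤ K' := mul_nonneg (mul_nonneg hcS0 (abs_nonneg _)) (by linarith)
  set M : ℝ := K' + (Fintype.card S : ℝ) + 4 with hMdef
  have hM1 : (1:ℝ) ≤ M := by rw [hMdef]; linarith
  have hM0 : (0:ℝ) < M := by linarith
  refine ⟨M ^ T, pow_pos hM0 T, ?_⟩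
  intro q hq01 hqsum hqLip N hN t htT xv hxv μ hμ hμpos α αt hα hαt s hts hsT i
  have hNR : (0:ℝ) < N := by exact_mod_cast hN
  have hNR1 : (1:ℝ) ≤ N := by exact_mod_cast hN
  have hsN : 0 < Real.sqrt N := Real.sqrt_pos.mpr hNR
  have h1sN : 1 ≤ Real.sqrt N := by
    rw [show (1:ℝ) = Real.sqrt 1 by simp]
    exact Real.sqrt_le_sqrt hNR1
  have hsNN : Real.sqrt N ≤ N := by
    nlinarith [Real.sq_sqrt hNR.le, Real.sqrt_nonneg N]
  have hNsN : 1 / (N:ℝ) ≤ 1 / Real.sqrt N := by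
    apply one_div_le_one_div_of_le hsN hsNN
  set θ : ℝ := W1 (emp xv) μ + 1 / Real.sqrt N with hθdef
  have hθN : 1 / Real.sqrt N ≤ θ := le_add_of_nonneg_left (MFGAux2.W1_nonneg _ _)
  have hθ0 : 0 < θ := lt_of_lt_of_le (by positivity) hθN
  have hq0 : ∀ u x ρ a y, IsProb ρ → 0 ≤ q u x ρ a y :=
    fun u x ρ a y h => (hq01 u x ρ a y h).1.le
  have hLip : ∀ u x ρ σ a b y, IsProb ρ → IsProb σ →
      |q u x ρ a y - q u x σ b y| ≤ |Lq| * (W1 ρ σ + dist a b) := by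
    intro u x ρ σ a b y hρ hσ
    refine le_trans (hqLip u x ρ σ a b y hρ hσ) ?_
    exact mul_le_mul_of_nonneg_right (le_abs_self Lq)
      (add_nonneg (MFGAux2.W1_nonneg _ _) dist_nonneg)
  have hempP : ∀ w : Fin N → S, IsProb (emp w) := MFGAux2.emp_isProb hN
  have hLipC : ∀ (β : ℕ → S → (S → ℝ) → A), LipCtrl L β → ∀ u x ρ σ, IsProb ρ → IsProb σ →
      (∑ y, |q u x ρ (β u x ρ) y - q u x σ (β u x σ) y|) ≤ K' * W1 ρ σ := by
    intro β hβ u x ρ σ hρ hσ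
    have hper : ∀ y, |q u x ρ (β u x ρ) y - q u x σ (β u x σ) y|
        ≤ |Lq| * ((1 + L) * W1 ρ σ) := by
      intro y
      refine le_trans (hLip u x ρ σ _ _ y hρ hσ) ?_
      have h1 := hβ u x ρ σ
      have hW := MFGAux2.W1_nonneg ρ σ
      nlinarith [abs_nonneg Lq]
    calc (∑ y, |q u x ρ (β u x ρ) y - q u x σ (β u x σ) y|)
        ≤ ∑ y : S, |Lq| * ((1 + L) * W1 ρ σ) := Finset.sum_le_sum fun y _ => hper y
      _ = K' * W1 ρ σ := by
          rw [Finset.sum_const, card_univ, nsmul_eq_mul, hK']; ring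
  set m := flowM q α t μ with hm
  have hflowP : ∀ u, IsProb (m u) := by
    intro u
    induction u with
    | zero => rw [hm, MFGAux2.flowM_le_t q α t μ (Nat.zero_le t)]; exact hμ
    | succ u ih =>
      by_cases h : u + 1 ≤ t
      · rw [hm, MFGAux2.flowM_le_t q α t μ h]; exact hμ
      · rw [hm, MFGAux2.flowM_succ q α t μ h]
        constructor
        · intro y
          exact Finset.sum_nonneg fun x _ => mul_nonneg (ih.1 x) (hq0 _ _ _ _ _ ih)
        · rw [Finset.sum_comm]
          have e : ∀ x, (∑ y, flowM q α t μ u x *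
              q u x (flowM q α t μ u) (α u x (flowM q α t μ u)) y) = flowM q α t μ u x := by
            intro x
            rw [← Finset.mul_sum, hqsum u x _ _ ih, mul_one]
          rw [Finset.sum_congr rfl (fun x _ => e x)]
          exact ih.2
  set αv := replaceI α αt i with hαv
  have hαvi : αv i = αt := by rw [hαv]; simp [replaceI]
  have hαvk : ∀ k, k ≠ i → αv k = α := by
    intro k hk; rw [hαv]; simp [replaceI, hk]
  set P := jointFlow q αv t xv with hP
  have hPprob : ∀ u, (∀ z, 0 ≤ P u z) ∧ (∑ z, P u z = 1) := by
    intro u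
    induction u with
    | zero =>
      rw [hP, MFGAux2.jointFlow_le_t q t αv xv (Nat.zero_le t)]
      constructor
      · intro z; dsimp only; split <;> norm_num
      · simp
    | succ u ih =>
      by_cases h : u + 1 ≤ t
      · rw [hP, MFGAux2.jointFlow_le_t q t αv xv h]
        constructor
        · intro z; dsimp only; split <;> norm_num
        · simp
      · rw [hP, MFGAux2.jointFlow_succ q t αv xv h]
        constructor
        · intro z
          exact Finset.sum_nonneg fun w _ => mul_nonneg (ih.1 w)
            (Finset.prod_nonneg fun k _ => hq0 _ _ _ _ _ (hempP w))
        · rw [Finset.sum_comm]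
          have e : ∀ w : Fin N → S, (∑ z : Fin N → S, jointFlow q αv t xv u w *
              ∏ k, q u (w k) (emp w) (αv k u (w k) (emp w)) (z k))
                = jointFlow q αv t xv u w := by
            intro w
            rw [← Finset.mul_sum]
            have e2 : (∑ z : Fin N → S, ∏ k, q u (w k) (emp w) (αv k u (w k) (emp w)) (z k))
                = ∏ k, ∑ x, q u (w k) (emp w) (αv k u (w k) (emp w)) x :=
              MFGAux.sum_prod_fin N (fun k x => q u (w k) (emp w) (αv k u (w k) (emp w)) x)
            rw [e2, Finset.prod_congr rfl
              (fun k _ => hqsum u (w k) (emp w) _ (hempP w)), Finset.prod_const_one, mul_one]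
          rw [Finset.sum_congr rfl (fun w _ => e w)]
          exact ih.2
  -- the main induction
  have key : ∀ u, t ≤ u →
      (∑ w : Fin N → S, P u w * W1 (emp w) (m u)) ≤ M ^ (u - t) * θ ∧
      W1 (fun y => ∑ w : Fin N → S, if w i = y then P u w else 0)
        (chainM q m αt t (xv i) u) ≤ M ^ (u - t) * θ := by
    intro u hu
    induction u, hu using Nat.le_induction with
    | base =>
      have hPt : P t = fun z => if z = xv then (1:ℝ) else 0 := by
        rw [hP]; exact MFGAux2.jointFlow_le_t q t αv xv le_rfl
      have hmt : m t = μ := by rw [hm]; exact MFGAux2.flowM_le_t q α t μ le_rfl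
      have hrt : chainM q m αt t (xv i) t = fun x => if x = xv i then (1:ℝ) else 0 :=
        MFGAux2.chainM_le_t q αt t m (xv i) le_rfl
      rw [Nat.sub_self, pow_zero, one_mul]
      constructor
      · simp only [hPt, hmt, ite_mul, one_mul, zero_mul]
        rw [Finset.sum_ite_eq' univ xv (fun w => W1 (emp w) μ)]
        simp only [mem_univ, if_true]
        exact le_add_of_nonneg_right (by positivity)
      · simp only [hPt, hrt]
        have e1 : ∀ y, (∑ w : Fin N → S, if w i = y then (if w = xv then (1:ℝ) else 0) else 0)
            = if xv i = y then 1 else 0 := by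
          intro y
          have e2 : ∀ w : Fin N → S, (if w i = y then (if w = xv then (1:ℝ) else 0) else 0)
              = if w = xv then (if w i = y then (1:ℝ) else 0) else 0 := by
            intro w
            by_cases h : w = xv
            · subst h; simp
            · simp [h]
          rw [Finset.sum_congr rfl (fun w _ => e2 w),
            Finset.sum_ite_eq' univ xv (fun w => if w i = y then (1:ℝ) else 0)]
          simp
        have efun : (fun y => ∑ w : Fin N → S, if w i = y then (if w = xv then (1:ℝ) else 0) else 0)
            = fun y => if xv i = y then (1:ℝ) else 0 := funext e1
        rw [efun]
        have eW : W1 (fun y => if xv i = y then (1:ℝ) else 0)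
            (fun x => if x = xv i then (1:ℝ) else 0) = 0 := by
          simp only [W1]
          refine Finset.sum_eq_zero fun y _ => ?_
          by_cases h : xv i = y
          · rw [if_pos h, if_pos h.symm]; simp
          · rw [if_neg h, if_neg (fun hy => h hy.symm)]; simp
        rw [eW]
        exact hθ0.le
    | succ u hu IH =>
      obtain ⟨IH1, IH2⟩ := IH
      have hnot : ¬ u + 1 ≤ t := by omega
      have hexp : u + 1 - t = (u - t) + 1 := by omega
      have hMj1 : (1:ℝ) ≤ M ^ (u - t) := by
        have := pow_le_pow_right₀ hM1 (Nat.zero_le (u - t))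
        simpa using this
      have hMj0 : (0:ℝ) < M ^ (u - t) := pow_pos hM0 _
      have hPs : P (u+1) = fun z => ∑ w : Fin N → S, P u w *
          ∏ k, q u (w k) (emp w) (αv k u (w k) (emp w)) (z k) := by
        rw [hP]; exact MFGAux2.jointFlow_succ q t αv xv hnot
      have hms : m (u+1) = fun y => ∑ x, m u x * q u x (m u) (α u x (m u)) y := by
        rw [hm]; exact MFGAux2.flowM_succ q α t μ hnot
      have hrs : chainM q m αt t (xv i) (u+1) = fun y => ∑ x,
          chainM q m αt t (xv i) u x * q u x (m u) (αt u x (m u)) y :=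
        MFGAux2.chainM_succ q αt t m (xv i) hnot
      -- per-`w` inner bound for part (i)
      have inner_bound : ∀ w : Fin N → S,
          (∑ z : Fin N → S, (∏ k, q u (w k) (emp w) (αv k u (w k) (emp w)) (z k)) *
            W1 (emp z) (m (u+1)))
          ≤ (Fintype.card S : ℝ) / Real.sqrt N + (1 + K') * W1 (emp w) (m u) + 2 / N := by
        intro w
        have hfl := MFGAux2.inner_est hN
          (fun k x => q u (w k) (emp w) (αv k u (w k) (emp w)) x)
          (fun k x => hq01 u (w k) (emp w) (αv k u (w k) (emp w)) x (hempP w))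
          (fun k => hqsum u (w k) (emp w) (αv k u (w k) (emp w)) (hempP w)) (m (u+1))
        have hsplit : ∀ y, (∑ k, q u (w k) (emp w) (αv k u (w k) (emp w)) y)
            = (∑ k, q u (w k) (emp w) (α u (w k) (emp w)) y)
            + (q u (w i) (emp w) (αt u (w i) (emp w)) y
              - q u (w i) (emp w) (α u (w i) (emp w)) y) := by
          intro y
          have h1 : (∑ k, (q u (w k) (emp w) (αv k u (w k) (emp w)) y
              - q u (w k) (emp w) (α u (w k) (emp w)) y))
              = q u (w i) (emp w) (αt u (w i) (emp w)) y
                - q u (w i) (emp w) (α u (w i) (emp w)) y := by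
            rw [Finset.sum_eq_single i]
            · rw [hαvi]
            · intro k _ hk
              rw [hαvk k hk, sub_self]
            · intro h; exact absurd (Finset.mem_univ i) h
          rw [Finset.sum_sub_distrib] at h1
          linarith
        have havg : ∀ y, (∑ k, q u (w k) (emp w) (α u (w k) (emp w)) y) / N
            = ∑ x, emp w x * q u x (emp w) (α u x (emp w)) y :=
          fun y => (MFGAux2.emp_avg hN w (fun x => q u x (emp w) (α u x (emp w)) y)).symm
        have key_y : ∀ y, |(∑ k, q u (w k) (emp w) (αv k u (w k) (emp w)) y) / N - m (u+1) y|
            ≤ (∑ x, |emp w x - m u x| * q u x (emp w) (α u x (emp w)) y)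
            + (∑ x, m u x * |q u x (emp w) (α u x (emp w)) y - q u x (m u) (α u x (m u)) y|)
            + (q u (w i) (emp w) (αt u (w i) (emp w)) y
                + q u (w i) (emp w) (α u (w i) (emp w)) y) / N := by
          intro y
          have e2 : m (u+1) y = ∑ x, m u x * q u x (m u) (α u x (m u)) y := by
            simp only [hms]
          have e3 : (∑ x, emp w x * q u x (emp w) (α u x (emp w)) y)
              - (∑ x, m u x * q u x (m u) (α u x (m u)) y)
              = ∑ x, ((emp w x - m u x) * q u x (emp w) (α u x (emp w)) y
                  + m u x * (q u x (emp w) (α u x (emp w)) y - q u x (m u) (α u x (m u)) y)) := by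
            rw [← Finset.sum_sub_distrib]
            exact Finset.sum_congr rfl fun x _ => by ring
          have e4 : (∑ k, q u (w k) (emp w) (αv k u (w k) (emp w)) y) / N - m (u+1) y
              = (∑ x, ((emp w x - m u x) * q u x (emp w) (α u x (emp w)) y
                  + m u x * (q u x (emp w) (α u x (emp w)) y - q u x (m u) (α u x (m u)) y)))
                + (q u (w i) (emp w) (αt u (w i) (emp w)) y
                  - q u (w i) (emp w) (α u (w i) (emp w)) y) / N := by
            rw [hsplit y, add_div, havg y, e2, ← e3]
            ring
          rw [e4]
          refine (abs_add_le _ _).trans (add_le_add ?_ ?_)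
          · rw [← Finset.sum_add_distrib]
            refine (Finset.abs_sum_le_sum_abs _ _).trans
              (Finset.sum_le_sum fun x _ => (abs_add_le _ _).trans ?_)
            rw [abs_mul, abs_mul, abs_of_nonneg (hq0 u x (emp w) (α u x (emp w)) y (hempP w)),
              abs_of_nonneg ((hflowP u).1 x)]
          · rw [abs_div, abs_of_pos hNR]
            have habs : |q u (w i) (emp w) (αt u (w i) (emp w)) y
                - q u (w i) (emp w) (α u (w i) (emp w)) y|
                ≤ q u (w i) (emp w) (αt u (w i) (emp w)) y
                  + q u (w i) (emp w) (α u (w i) (emp w)) y := by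
              have h1 := hq0 u (w i) (emp w) (αt u (w i) (emp w)) y (hempP w)
              have h2 := hq0 u (w i) (emp w) (α u (w i) (emp w)) y (hempP w)
              rw [abs_sub_le_iff]
              constructor <;> linarith
            exact (div_le_div_iff_of_pos_right hNR).mpr habs
        have drift : W1 (fun y => (∑ k, q u (w k) (emp w) (αv k u (w k) (emp w)) y) / N)
              (m (u+1))
            ≤ (1 + K') * W1 (emp w) (m u) + 2 / N := by
          have T1 : (∑ y, ∑ x, |emp w x - m u x| * q u x (emp w) (α u x (emp w)) y)
              = W1 (emp w) (m u) := by
            rw [Finset.sum_comm]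
            have e : ∀ x, (∑ y, |emp w x - m u x| * q u x (emp w) (α u x (emp w)) y)
                = |emp w x - m u x| := by
              intro x
              rw [← Finset.mul_sum, hqsum u x (emp w) (α u x (emp w)) (hempP w), mul_one]
            rw [Finset.sum_congr rfl (fun x _ => e x)]
            simp only [W1]
          have T2 : (∑ y, ∑ x, m u x * |q u x (emp w) (α u x (emp w)) y
                - q u x (m u) (α u x (m u)) y|)
              ≤ K' * W1 (emp w) (m u) := by
            rw [Finset.sum_comm]
            calc (∑ x, ∑ y, m u x * |q u x (emp w) (α u x (emp w)) y
                  - q u x (m u) (α u x (m u)) y|)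
                = ∑ x, m u x * ∑ y, |q u x (emp w) (α u x (emp w)) y
                  - q u x (m u) (α u x (m u)) y| :=
                  Finset.sum_congr rfl fun x _ => (Finset.mul_sum _ _ _).symm
              _ ≤ ∑ x, m u x * (K' * W1 (emp w) (m u)) :=
                  Finset.sum_le_sum fun x _ => mul_le_mul_of_nonneg_left
                    (hLipC α hα u x (emp w) (m u) (hempP w) (hflowP u)) ((hflowP u).1 x)
              _ = K' * W1 (emp w) (m u) := by
                  rw [← Finset.sum_mul, (hflowP u).2, one_mul]
          have T3 : (∑ y, (q u (w i) (emp w) (αt u (w i) (emp w)) y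
                + q u (w i) (emp w) (α u (w i) (emp w)) y) / N) = 2 / (N:ℝ) := by
            rw [← Finset.sum_div, Finset.sum_add_distrib,
              hqsum u (w i) (emp w) (αt u (w i) (emp w)) (hempP w),
              hqsum u (w i) (emp w) (α u (w i) (emp w)) (hempP w)]
            norm_num
          calc W1 (fun y => (∑ k, q u (w k) (emp w) (αv k u (w k) (emp w)) y) / N) (m (u+1))
              = ∑ y, |(∑ k, q u (w k) (emp w) (αv k u (w k) (emp w)) y) / N - m (u+1) y| := by
                simp only [W1]
            _ ≤ ∑ y, ((∑ x, |emp w x - m u x| * q u x (emp w) (α u x (emp w)) y)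
                + (∑ x, m u x * |q u x (emp w) (α u x (emp w)) y
                    - q u x (m u) (α u x (m u)) y|)
                + (q u (w i) (emp w) (αt u (w i) (emp w)) y
                    + q u (w i) (emp w) (α u (w i) (emp w)) y) / N) :=
                Finset.sum_le_sum fun y _ => key_y y
            _ = (∑ y, ∑ x, |emp w x - m u x| * q u x (emp w) (α u x (emp w)) y)
                + (∑ y, ∑ x, m u x * |q u x (emp w) (α u x (emp w)) y
                    - q u x (m u) (α u x (m u)) y|)
                + ∑ y, (q u (w i) (emp w) (αt u (w i) (emp w)) y
                    + q u (w i) (emp w) (α u (w i) (emp w)) y) / N := by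
                rw [Finset.sum_add_distrib, Finset.sum_add_distrib]
            _ ≤ W1 (emp w) (m u) + K' * W1 (emp w) (m u) + 2 / N := by
                rw [T1, T3]
                exact add_le_add (add_le_add_right T2 _) le_rfl
            _ = (1 + K') * W1 (emp w) (m u) + 2 / N := by ring
        exact hfl.trans (by linarith [drift])
      have hD1 : (∑ z : Fin N → S, P (u+1) z * W1 (emp z) (m (u+1)))
          = ∑ w : Fin N → S, P u w * ∑ z : Fin N → S,
              (∏ k, q u (w k) (emp w) (αv k u (w k) (emp w)) (z k)) * W1 (emp z) (m (u+1)) := by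
        simp only [hPs, Finset.sum_mul]
        rw [Finset.sum_comm]
        exact Finset.sum_congr rfl fun w _ => by
          rw [Finset.mul_sum]
          exact Finset.sum_congr rfl fun z _ => by ring
      have h2N : (2:ℝ) / N ≤ 2 / Real.sqrt N := by
        rw [show (2:ℝ)/N = 2 * (1/N) by ring, show (2:ℝ)/Real.sqrt N = 2*(1/Real.sqrt N) by ring]
        linarith
      have Dstep : (∑ z : Fin N → S, P (u+1) z * W1 (emp z) (m (u+1)))
          ≤ (1 + K') * (∑ w : Fin N → S, P u w * W1 (emp w) (m u))
            + ((Fintype.card S : ℝ) + 2) / Real.sqrt N := by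
        rw [hD1]
        have hw : ∀ w : Fin N → S, P u w * (∑ z : Fin N → S,
              (∏ k, q u (w k) (emp w) (αv k u (w k) (emp w)) (z k)) * W1 (emp z) (m (u+1)))
            ≤ (1 + K') * (P u w * W1 (emp w) (m u))
              + (((Fintype.card S : ℝ) + 2) / Real.sqrt N) * P u w := by
          intro w
          have h2 := inner_bound w
          have hP0 := (hPprob u).1 w
          have h3 : (Fintype.card S : ℝ) / Real.sqrt N + (1 + K') * W1 (emp w) (m u) + 2 / N
              ≤ (1 + K') * W1 (emp w) (m u) + ((Fintype.card S : ℝ) + 2) / Real.sqrt N := by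
            rw [add_div]
            linarith
          calc P u w * (∑ z : Fin N → S,
                (∏ k, q u (w k) (emp w) (αv k u (w k) (emp w)) (z k)) * W1 (emp z) (m (u+1)))
              ≤ P u w * ((1 + K') * W1 (emp w) (m u)
                  + ((Fintype.card S : ℝ) + 2) / Real.sqrt N) :=
                mul_le_mul_of_nonneg_left (h2.trans h3) hP0
            _ = (1 + K') * (P u w * W1 (emp w) (m u))
                + (((Fintype.card S : ℝ) + 2) / Real.sqrt N) * P u w := by ring
        refine (Finset.sum_le_sum fun w _ => hw w).trans ?_
        rw [Finset.sum_add_distrib, ← Finset.mul_sum, ← Finset.mul_sum, (hPprob u).2, mul_one]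
      -- part (ii) step
      have hpnext : ∀ y, (∑ z : Fin N → S, if z i = y then P (u+1) z else 0)
          = ∑ w : Fin N → S, P u w * q u (w i) (emp w) (αt u (w i) (emp w)) y := by
        intro y
        simp only [hPs]
        have e1 : ∀ z : Fin N → S, (if z i = y then (∑ w : Fin N → S, P u w *
              ∏ k, q u (w k) (emp w) (αv k u (w k) (emp w)) (z k)) else 0)
            = ∑ w : Fin N → S, P u w * (if z i = y then
                ∏ k, q u (w k) (emp w) (αv k u (w k) (emp w)) (z k) else 0) := by
          intro z; split_ifs <;> simp
        rw [Finset.sum_congr rfl (fun z _ => e1 z), Finset.sum_comm]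
        refine Finset.sum_congr rfl fun w _ => ?_
        rw [← Finset.mul_sum]
        congr 1
        have e2 : (∑ z : Fin N → S, if z i = y then
              (∏ k, q u (w k) (emp w) (αv k u (w k) (emp w)) (z k)) else 0)
            = q u (w i) (emp w) (αv i u (w i) (emp w)) y :=
          MFGAux.marginal N (fun k x => q u (w k) (emp w) (αv k u (w k) (emp w)) x)
            (fun k => hqsum u (w k) (emp w) _ (hempP w)) i y
        rw [e2, hαvi]
      have Estep : W1 (fun y => ∑ z : Fin N → S, if z i = y then P (u+1) z else 0)
            (chainM q m αt t (xv i) (u+1))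
          ≤ K' * (∑ w : Fin N → S, P u w * W1 (emp w) (m u))
            + W1 (fun y => ∑ w : Fin N → S, if w i = y then P u w else 0)
                (chainM q m αt t (xv i) u) := by
        have hrsum : ∀ x, ∑ y, q u x (m u) (αt u x (m u)) y = 1 :=
          fun x => hqsum u x (m u) _ (hflowP u)
        have per_y : ∀ y, |(∑ z : Fin N → S, if z i = y then P (u+1) z else 0)
            - chainM q m αt t (xv i) (u+1) y|
            ≤ (∑ w : Fin N → S, P u w * |q u (w i) (emp w) (αt u (w i) (emp w)) y
                  - q u (w i) (m u) (αt u (w i) (m u)) y|)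
              + ∑ x, |(∑ w : Fin N → S, if w i = x then P u w else 0)
                  - chainM q m αt t (xv i) u x| * q u x (m u) (αt u x (m u)) y := by
          intro y
          rw [hpnext y]
          have er : chainM q m αt t (xv i) (u+1) y
              = ∑ x, chainM q m αt t (xv i) u x * q u x (m u) (αt u x (m u)) y := by
            simp only [hrs]
          rw [er]
          have emid : (∑ w : Fin N → S, P u w * q u (w i) (m u) (αt u (w i) (m u)) y)
              = ∑ x, (∑ w : Fin N → S, if w i = x then P u w else 0)
                  * q u x (m u) (αt u x (m u)) y :=
            (MFGAux2.fiber (P u) i (fun x => q u x (m u) (αt u x (m u)) y)).symm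
          have split : (∑ w : Fin N → S, P u w * q u (w i) (emp w) (αt u (w i) (emp w)) y)
              - (∑ x, chainM q m αt t (xv i) u x * q u x (m u) (αt u x (m u)) y)
              = (∑ w : Fin N → S, P u w * (q u (w i) (emp w) (αt u (w i) (emp w)) y
                  - q u (w i) (m u) (αt u (w i) (m u)) y))
                + ∑ x, ((∑ w : Fin N → S, if w i = x then P u w else 0)
                    - chainM q m αt t (xv i) u x) * q u x (m u) (αt u x (m u)) y := by
            simp only [mul_sub, sub_mul, Finset.sum_sub_distrib]
            linarith [emid]
          rw [split]
          refine (abs_add_le _ _).trans (add_le_add ?_ ?_)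
          · refine (Finset.abs_sum_le_sum_abs _ _).trans (Finset.sum_le_sum fun w _ => ?_)
            rw [abs_mul, abs_of_nonneg ((hPprob u).1 w)]
          · refine (Finset.abs_sum_le_sum_abs _ _).trans (Finset.sum_le_sum fun x _ => ?_)
            rw [abs_mul, abs_of_nonneg (hq0 u x (m u) _ y (hflowP u))]
        have h1 : (∑ y, ∑ w : Fin N → S, P u w * |q u (w i) (emp w) (αt u (w i) (emp w)) y
              - q u (w i) (m u) (αt u (w i) (m u)) y|)
            ≤ K' * (∑ w : Fin N → S, P u w * W1 (emp w) (m u)) := by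
          rw [Finset.sum_comm]
          calc (∑ w : Fin N → S, ∑ y, P u w * |q u (w i) (emp w) (αt u (w i) (emp w)) y
                - q u (w i) (m u) (αt u (w i) (m u)) y|)
              = ∑ w : Fin N → S, P u w * ∑ y, |q u (w i) (emp w) (αt u (w i) (emp w)) y
                - q u (w i) (m u) (αt u (w i) (m u)) y| :=
                Finset.sum_congr rfl fun w _ => (Finset.mul_sum _ _ _).symm
            _ ≤ ∑ w : Fin N → S, P u w * (K' * W1 (emp w) (m u)) :=
                Finset.sum_le_sum fun w _ => mul_le_mul_of_nonneg_left
                  (hLipC αt hαt u (w i) (emp w) (m u) (hempP w) (hflowP u)) ((hPprob u).1 w)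
            _ = K' * (∑ w : Fin N → S, P u w * W1 (emp w) (m u)) := by
                rw [Finset.mul_sum]
                exact Finset.sum_congr rfl fun w _ => by ring
        have h2 : (∑ y, ∑ x, |(∑ w : Fin N → S, if w i = x then P u w else 0)
              - chainM q m αt t (xv i) u x| * q u x (m u) (αt u x (m u)) y)
            = W1 (fun y => ∑ w : Fin N → S, if w i = y then P u w else 0)
                (chainM q m αt t (xv i) u) := by
          rw [Finset.sum_comm]
          have e : ∀ x, (∑ y, |(∑ w : Fin N → S, if w i = x then P u w else 0)
                - chainM q m αt t (xv i) u x| * q u x (m u) (αt u x (m u)) y)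
              = |(∑ w : Fin N → S, if w i = x then P u w else 0)
                - chainM q m αt t (xv i) u x| := by
            intro x
            rw [← Finset.mul_sum, hrsum x, mul_one]
          rw [Finset.sum_congr rfl (fun x _ => e x)]
          simp only [W1]
        calc W1 (fun y => ∑ z : Fin N → S, if z i = y then P (u+1) z else 0)
              (chainM q m αt t (xv i) (u+1))
            = ∑ y, |(∑ z : Fin N → S, if z i = y then P (u+1) z else 0)
                - chainM q m αt t (xv i) (u+1) y| := by simp only [W1]
          _ ≤ ∑ y, ((∑ w : Fin N → S, P u w * |q u (w i) (emp w) (αt u (w i) (emp w)) y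
                  - q u (w i) (m u) (αt u (w i) (m u)) y|)
                + ∑ x, |(∑ w : Fin N → S, if w i = x then P u w else 0)
                    - chainM q m αt t (xv i) u x| * q u x (m u) (αt u x (m u)) y) :=
              Finset.sum_le_sum fun y _ => per_y y
          _ = (∑ y, ∑ w : Fin N → S, P u w * |q u (w i) (emp w) (αt u (w i) (emp w)) y
                  - q u (w i) (m u) (αt u (w i) (m u)) y|)
              + ∑ y, ∑ x, |(∑ w : Fin N → S, if w i = x then P u w else 0)
                  - chainM q m αt t (xv i) u x| * q u x (m u) (αt u x (m u)) y :=
              Finset.sum_add_distrib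
          _ ≤ _ := by rw [h2]; exact add_le_add_left h1 _
      -- conclude
      have hM3 : (1:ℝ) + K' + ((Fintype.card S : ℝ) + 2) ≤ M := by rw [hMdef]; linarith
      have hXnn : (0:ℝ) ≤ M ^ (u - t) * θ := le_of_lt (mul_pos hMj0 hθ0)
      rw [hexp, pow_succ]
      constructor
      · have c1 : (1 + K') * (∑ w : Fin N → S, P u w * W1 (emp w) (m u))
            ≤ (1 + K') * (M ^ (u - t) * θ) :=
          mul_le_mul_of_nonneg_left IH1 (by linarith)
        have c2 : ((Fintype.card S : ℝ) + 2) / Real.sqrt N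
            ≤ ((Fintype.card S : ℝ) + 2) * (M ^ (u - t) * θ) := by
          calc ((Fintype.card S : ℝ) + 2) / Real.sqrt N
              = ((Fintype.card S : ℝ) + 2) * (1 / Real.sqrt N) := by ring
            _ ≤ ((Fintype.card S : ℝ) + 2) * θ :=
                mul_le_mul_of_nonneg_left hθN (by linarith)
            _ ≤ ((Fintype.card S : ℝ) + 2) * (M ^ (u - t) * θ) :=
                mul_le_mul_of_nonneg_left (le_mul_of_one_le_left hθ0.le hMj1) (by linarith)
        have c3 : (1 + K') * (M ^ (u - t) * θ) + ((Fintype.card S : ℝ) + 2) * (M ^ (u - t) * θ)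
            ≤ M ^ (u - t) * M * θ := by
          have e : (1 + K') * (M ^ (u - t) * θ) + ((Fintype.card S : ℝ) + 2) * (M ^ (u - t) * θ)
              = (1 + K' + ((Fintype.card S : ℝ) + 2)) * (M ^ (u - t) * θ) := by ring
          have e2 : M ^ (u - t) * M * θ = M * (M ^ (u - t) * θ) := by ring
          rw [e, e2]
          exact mul_le_mul_of_nonneg_right hM3 hXnn
        exact Dstep.trans ((add_le_add c1 c2).trans c3)
      · have c1 : K' * (∑ w : Fin N → S, P u w * W1 (emp w) (m u))
            ≤ K' * (M ^ (u - t) * θ) := mul_le_mul_of_nonneg_left IH1 hK'0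
        have c3 : K' * (M ^ (u - t) * θ) + M ^ (u - t) * θ ≤ M ^ (u - t) * M * θ := by
          have hM4 : K' + 1 ≤ M := by rw [hMdef]; linarith
          have e : K' * (M ^ (u - t) * θ) + M ^ (u - t) * θ = (K' + 1) * (M ^ (u - t) * θ) := by
            ring
          have e2 : M ^ (u - t) * M * θ = M * (M ^ (u - t) * θ) := by ring
          rw [e, e2]
          exact mul_le_mul_of_nonneg_right hM4 hXnn
        exact Estep.trans ((add_le_add c1 IH2).trans c3)
  have hpow : M ^ (s - t) ≤ M ^ T := pow_le_pow_right₀ hM1 (by omega)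
  obtain ⟨k1, k2⟩ := key s hts
  exact ⟨k1.trans (mul_le_mul_of_nonneg_right hpow hθ0.le),
    k2.trans (mul_le_mul_of_nonneg_right hpow hθ0.le)⟩
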